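/- Let 1 ≤ k ≤ n and κ ∈ Γ_k with entries ordered κ_1 ≥ ⋯ ≥ κ_n. Then κ_n ≥ -((n-k)/k) · κ_1; in particular every entry κ_j satisfies κ_j ≥ -((n-k)/k) κ_1. -/

import Mathlib

open Multiset Polynomial

lemma esymm_zero' (s : Multiset ℝ) : s.esymm 0 = 1 := by simp [Multiset.esymm]

lemma esymm_of_lt {s : Multiset ℝ} {j : ℕ} (h : Multiset.card s < j) : s.esymm j = 0 := by
  simp [Multiset.esymm, Multiset.powersetCard_eq_empty _ h]

lemma esymm_cons (a : ℝ) (s : Multiset ℝ) (j : ℕ) :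
    (a ::ₘ s).esymm (j+1) = s.esymm (j+1) + a * s.esymm j := by
  simp only [Multiset.esymm, Multiset.powersetCard_cons, Multiset.map_add, Multiset.sum_add,
    Multiset.map_map, Function.comp_def, Multiset.prod_cons]
  rw [← Multiset.sum_map_mul_left]

lemma top_newton : ∀ (s : Multiset ℝ) (t : ℕ), Multiset.card s = t + 2 →
    2*((t:ℝ)+2) * (s.esymm (t+2) * s.esymm t) ≤ ((t:ℝ)+1) * s.esymm (t+1)^2 := by
  intro s
  induction s using Multiset.induction_on with
  | empty => intro t ht; simp at ht
  | cons a s IH =>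
    intro t ht
    simp only [Multiset.card_cons] at ht
    match t with
    | 0 =>
      obtain ⟨x, rfl⟩ := Multiset.card_eq_one.1 (by omega : Multiset.card s = 1)
      have e2 : (a ::ₘ {x}).esymm 2 = a * x := by
        rw [show (2:ℕ) = 1 + 1 from rfl, esymm_cons]
        simp [Multiset.esymm, Multiset.powersetCard_one]
      have e1 : (a ::ₘ {x}).esymm 1 = x + a := by
        rw [show (1:ℕ) = 0 + 1 from rfl, esymm_cons]
        simp [Multiset.esymm, Multiset.powersetCard_one]
      rw [e2, e1, esymm_zero']
      nlinarith [sq_nonneg (a - x)]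
    | r + 1 =>
      have hcs : Multiset.card s = r + 2 := by omega
      have IH2 := IH r hcs
      have hz : s.esymm (r+3) = 0 := esymm_of_lt (by omega)
      have E3 : (a ::ₘ s).esymm (r+3) = a * s.esymm (r+2) := by
        rw [show r+3 = (r+2)+1 from rfl, esymm_cons, hz]; ring
      have E2 : (a ::ₘ s).esymm (r+2) = s.esymm (r+2) + a * s.esymm (r+1) := by
        rw [show r+2 = (r+1)+1 from rfl, esymm_cons]
      have E1 : (a ::ₘ s).esymm (r+1) = s.esymm (r+1) + a * s.esymm r := by
        rw [show r+1 = r+1 from rfl, esymm_cons]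
      rw [E3, E2, E1]
      push_cast
      have hsq := sq_nonneg (((r:ℝ)+2) * s.esymm (r+2) - a * s.esymm (r+1))
      have hmul : (0:ℝ) ≤ a^2 * (((r:ℝ)+1) * s.esymm (r+1)^2
          - 2*((r:ℝ)+2) * (s.esymm (r+2) * s.esymm r)) :=
        mul_nonneg (sq_nonneg a) (by linarith)
      nlinarith [hsq, hmul]

lemma exists_deriv (s : Multiset ℝ) (m : ℕ) (hm : Multiset.card s = m) (h1 : 1 ≤ m) :
    ∃ u : Multiset ℝ, Multiset.card u = m - 1 ∧
      ∀ j, j ≤ m - 1 → (m:ℝ) * u.esymm j = ((m:ℝ) - j) * s.esymm j := by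
  set p : ℝ[X] := (s.map fun a => X - C a).prod with hp
  have hmono : ∀ f ∈ s.map fun a => X - C a, f.Monic := by
    intro f hf; obtain ⟨a, _, rfl⟩ := Multiset.mem_map.1 hf; exact monic_X_sub_C a
  have hmonic : p.Monic := monic_multiset_prod_of_monic _ _ (fun a _ => monic_X_sub_C a)
  have hdeg : p.natDegree = m := by
    rw [hp, natDegree_multiset_prod_of_monic _ hmono]
    simp [Multiset.map_map, Function.comp_def, natDegree_X_sub_C, hm]
  have hroots : p.roots = s := roots_multiset_prod_X_sub_C s
  set q : ℝ[X] := derivative p with hq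
  have hqtop : q.coeff (m - 1) = m := by
    rw [hq, coeff_derivative]
    rw [show m - 1 + 1 = m by omega]
    rw [show p.coeff m = 1 by
      have := hmonic.coeff_natDegree; rwa [hdeg] at this]
    rw [one_mul]
    norm_cast
    omega
  have hqdeg : q.natDegree = m - 1 := by
    have hlt := natDegree_derivative_lt (p := p) (by omega : p.natDegree ≠ 0)
    rw [← hq] at hlt
    have hge : m - 1 ≤ q.natDegree := le_natDegree_of_ne_zero (by rw [hqtop]; positivity)
    omega
  have hqlead : q.leadingCoeff = m := by
    rw [leadingCoeff, hqdeg, hqtop]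
  have hcard : Multiset.card q.roots = m - 1 := by
    have h2 := card_roots_le_derivative p
    rw [hroots, hm, ← hq] at h2
    have h3 : Multiset.card q.roots ≤ q.natDegree := q.card_roots'
    omega
  refine ⟨q.roots, hcard, fun j hj => ?_⟩
  have hpcard : Multiset.card p.roots = p.natDegree := by rw [hroots, hm, hdeg]
  have h3 : p.coeff (m - j) = p.leadingCoeff * (-1)^(p.natDegree - (m - j)) *
      p.roots.esymm (p.natDegree - (m - j)) :=
    coeff_eq_esymm_roots_of_card hpcard (by omega)
  rw [hdeg, hmonic.leadingCoeff, hroots, show m - (m - j) = j by omega, one_mul] at h3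
  have h4 : q.coeff (m - 1 - j) = q.leadingCoeff * (-1)^(q.natDegree - (m - 1 - j)) *
      q.roots.esymm (q.natDegree - (m - 1 - j)) :=
    coeff_eq_esymm_roots_of_card (by rw [hcard, hqdeg]) (by omega)
  rw [hqdeg, hqlead, show m - 1 - (m - 1 - j) = j by omega] at h4
  have h5 : q.coeff (m - 1 - j) = p.coeff (m - 1 - j + 1) * ((m - 1 - j : ℕ) + 1) := by
    rw [hq, coeff_derivative]
  rw [show m - 1 - j + 1 = m - j by omega, h3] at h5
  have hcast : ((m - 1 - j : ℕ) : ℝ) + 1 = (m : ℝ) - j := by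
    have : ((m - 1 - j : ℕ) : ℝ) = (m : ℝ) - 1 - j := by
      push_cast [Nat.cast_sub (show j ≤ m - 1 from hj), Nat.cast_sub (show 1 ≤ m from h1)]
      ring
    rw [this]; ring
  rw [hcast] at h5
  rw [h5] at h4
  have hne : ((-1 : ℝ))^j ≠ 0 := pow_ne_zero _ (by norm_num)
  have h6 : (-1:ℝ)^j * ((m:ℝ) * q.roots.esymm j) = (-1:ℝ)^j * (((m:ℝ)-j) * s.esymm j) := by
    linear_combination -h4
  exact mul_left_cancel₀ hne h6

lemma np : ∀ m : ℕ, ∀ s : Multiset ℝ, Multiset.card s = m → ∀ j : ℕ, 1 ≤ j → j + 1 ≤ m →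
    ((j:ℝ)+1) * (((m:ℝ) - j) + 1) * (s.esymm (j+1) * s.esymm (j-1)) ≤
      (j:ℝ) * ((m:ℝ) - j) * s.esymm j ^ 2 := by
  intro m
  induction m using Nat.strong_induction_on with
  | _ m IH =>
    intro s hs j hj hjm
    rcases eq_or_lt_of_le hjm with heq | hlt
    · obtain ⟨t, rfl⟩ : ∃ t, j = t + 1 := ⟨j - 1, by omega⟩
      have hm : m = t + 2 := by omega
      subst hm
      have hT := top_newton s t hs
      push_cast
      nlinarith [hT]
    · obtain ⟨u, hucard, hurel⟩ := exists_deriv s m hs (by omega)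
      have IHu := IH (m-1) (by omega) u hucard j hj (by omega)
      have hc1 : ((m-1 : ℕ) : ℝ) = (m:ℝ) - 1 := by
        push_cast [Nat.cast_sub (show 1 ≤ m by omega)]; ring
      rw [hc1] at IHu
      have r1 := hurel (j+1) (by omega)
      have r2 := hurel j (by omega)
      have r3 := hurel (j-1) (by omega)
      have hc2 : (((j-1:ℕ)) : ℝ) = (j:ℝ) - 1 := by
        push_cast [Nat.cast_sub (show 1 ≤ j by omega)]; ring
      rw [hc2] at r3
      push_cast at r1
      have e1 : (m:ℝ)^2 * (((j:ℝ)+1) * (((m:ℝ)-1) - j + 1) * (u.esymm (j+1) * u.esymm (j-1)))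
          = ((j:ℝ)+1)*(((m:ℝ)-j)+1)*(s.esymm (j+1)*s.esymm (j-1)) * (((m:ℝ)-j)*(((m:ℝ)-j)-1)) := by
        linear_combination (((j:ℝ)+1) * (((m:ℝ)-1) - (j:ℝ) + 1) * ((m:ℝ)*u.esymm (j-1))) * r1
          + (((j:ℝ)+1) * (((m:ℝ)-1) - (j:ℝ) + 1) * (((m:ℝ)-j)-1) * s.esymm (j+1)) * r3
      have e2 : (m:ℝ)^2 * ((j:ℝ) * (((m:ℝ)-1) - j) * u.esymm j ^2)
          = (j:ℝ)*((m:ℝ)-j)*s.esymm j^2 * (((m:ℝ)-j)*(((m:ℝ)-j)-1)) := by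
        linear_combination ((j:ℝ) * (((m:ℝ)-1) - (j:ℝ)) * ((m:ℝ)*u.esymm j + ((m:ℝ)-j)*s.esymm j)) * r2
      have key : ((j:ℝ)+1)*(((m:ℝ)-j)+1)*(s.esymm (j+1)*s.esymm (j-1)) * (((m:ℝ)-j)*(((m:ℝ)-j)-1))
          ≤ (j:ℝ)*((m:ℝ)-j)*s.esymm j^2 * (((m:ℝ)-j)*(((m:ℝ)-j)-1)) := by
        rw [← e1, ← e2]
        exact mul_le_mul_of_nonneg_left IHu (sq_nonneg _)
      have hcd : (0:ℝ) < ((m:ℝ)-j)*(((m:ℝ)-j)-1) := by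
        have : (j:ℝ) + 2 ≤ (m:ℝ) := by exact_mod_cast (by omega : j + 2 ≤ m)
        nlinarith
      exact le_of_mul_le_mul_right key hcd

lemma newton (s : Multiset ℝ) (j : ℕ) (hj : 1 ≤ j) :
    s.esymm (j+1) * s.esymm (j-1) ≤ s.esymm j ^ 2 := by
  rcases le_or_gt (j+1) (Multiset.card s) with h | h
  · have hnp := np (Multiset.card s) s rfl j hj h
    rcases le_or_gt (s.esymm (j+1) * s.esymm (j-1)) 0 with hP | hP
    · exact hP.trans (sq_nonneg _)
    · have h1 : (1:ℝ) ≤ (j:ℝ) := by exact_mod_cast hj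
      have h2 : (1:ℝ) ≤ (Multiset.card s : ℝ) - j := by
        have : (j:ℝ) + 1 ≤ (Multiset.card s:ℝ) := by exact_mod_cast h
        linarith
      by_contra hcon
      push_neg at hcon
      have hjm : (0:ℝ) < (j:ℝ)*((Multiset.card s:ℝ)-j) := by nlinarith
      have c1 : (j:ℝ)*((Multiset.card s:ℝ)-j)*(s.esymm j ^2) <
          (j:ℝ)*((Multiset.card s:ℝ)-j)*(s.esymm (j+1) * s.esymm (j-1)) :=
        mul_lt_mul_of_pos_left hcon hjm
      have c2 : ((j:ℝ)+1) * (((Multiset.card s:ℝ) - j) + 1) * (s.esymm (j+1) * s.esymm (j-1)) <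
          (j:ℝ)*((Multiset.card s:ℝ)-j)*(s.esymm (j+1) * s.esymm (j-1)) := by nlinarith
      nlinarith [mul_pos hjm hP]
  · rw [esymm_of_lt h]
    nlinarith [sq_nonneg (s.esymm j)]

lemma esymm_one' (s : Multiset ℝ) : s.esymm 1 = s.sum := by
  simp [Multiset.esymm, Multiset.powersetCard_one, Multiset.map_map]

lemma esymm_nonneg {s : Multiset ℝ} (h : ∀ x ∈ s, 0 ≤ x) (j : ℕ) : 0 ≤ s.esymm j := by
  refine Multiset.sum_nonneg ?_
  intro x hx
  simp only [Multiset.mem_map] at hx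
  obtain ⟨t, ht, rfl⟩ := hx
  refine Multiset.prod_nonneg ?_
  intro y hy
  exact h y (Multiset.mem_of_le (Multiset.mem_powersetCard.1 ht).1 hy)

lemma pos_of_cons_nonpos {a : ℝ} {s : Multiset ℝ} {k : ℕ} (ha : a ≤ 0)
    (h : ∀ t, 1 ≤ t → t ≤ k → 0 < (a ::ₘ s).esymm t) :
    ∀ t, t ≤ k → 0 < s.esymm t := by
  intro t
  induction t with
  | zero => intro _; rw [esymm_zero']; norm_num
  | succ r IHr =>
    intro hr
    have h1 := h (r+1) (by omega) hr
    rw [esymm_cons] at h1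
    have h2 := IHr (by omega)
    nlinarith [h1, h2]

lemma all_pos_of_card_eq {s : Multiset ℝ} {k : ℕ} (hk : 1 ≤ k) (hcard : Multiset.card s = k)
    (h : ∀ t, 1 ≤ t → t ≤ k → 0 < s.esymm t) : ∀ a ∈ s, 0 < a := by
  intro a ha
  by_contra hna
  push_neg at hna
  obtain ⟨w, hw'⟩ : ∃ w, s = a ::ₘ w := ⟨s.erase a, (Multiset.cons_erase ha).symm⟩
  subst hw'
  have hw := pos_of_cons_nonpos hna h
  have hcw : Multiset.card w = k - 1 := by simp at hcard; omega
  have h1 := h k hk le_rfl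
  obtain ⟨r, rfl⟩ : ∃ r, k = r + 1 := ⟨k-1, by omega⟩
  have hEk : w.esymm (r+1) = 0 := esymm_of_lt (by omega)
  rw [esymm_cons, hEk] at h1
  have h2 := hw r (by omega)
  nlinarith [h1, h2]

lemma nonneg_level_bound {L : ℝ} :
    ∀ (s : Multiset ℝ), (∀ x ∈ s, 0 ≤ x) → (∀ x ∈ s, x ≤ L) → 0 ≤ L →
    ∀ j : ℕ, ((j:ℝ)+1) * s.esymm (j+1) ≤ ((Multiset.card s : ℝ) - j) * L * s.esymm j := by
  intro s
  induction s using Multiset.induction_on with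
  | empty =>
    intro _ _ hL j
    rcases j with _ | r
    · simp [esymm_zero', esymm_of_lt (show Multiset.card (0 : Multiset ℝ) < 1 by simp)]
    · rw [esymm_of_lt (by simp), esymm_of_lt (by simp)]
      simp
  | cons a s IH =>
    intro hnn hsL hL j
    have ha0 : 0 ≤ a := hnn a (Multiset.mem_cons_self a s)
    have haL : a ≤ L := hsL a (Multiset.mem_cons_self a s)
    have hnn' : ∀ x ∈ s, 0 ≤ x := fun x hx => hnn x (Multiset.mem_cons_of_mem hx)
    have hsL' : ∀ x ∈ s, x ≤ L := fun x hx => hsL x (Multiset.mem_cons_of_mem hx)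
    have hEnn := esymm_nonneg hnn'
    simp only [Multiset.card_cons]
    rcases j with _ | r
    · have IH0 := IH hnn' hsL' hL 0
      simp only [esymm_one', esymm_zero', show (0:ℕ)+1 = 1 from rfl, Multiset.sum_cons,
        Nat.cast_zero, mul_one] at IH0 ⊢
      push_cast
      linarith [IH0]
    · have IH1 := IH hnn' hsL' hL (r+1)
      have IH0 := IH hnn' hsL' hL r
      rw [esymm_cons, esymm_cons]
      push_cast
      push_cast at IH1 IH0
      have p1 : a * (((r:ℝ)+1) * s.esymm (r+1)) ≤ a * (((Multiset.card s:ℝ) - r) * L * s.esymm r) :=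
        mul_le_mul_of_nonneg_left IH0 ha0
      have p2 : a * s.esymm (r+1) ≤ L * s.esymm (r+1) :=
        mul_le_mul_of_nonneg_right haL (hEnn (r+1))
      nlinarith [IH1, p1, p2]

lemma main_bound {k : ℕ} (hk : 1 ≤ k) {L : ℝ} :
    ∀ N : ℕ, ∀ s : Multiset ℝ, Multiset.card s = N → k ≤ N → (∀ x ∈ s, x ≤ L) →
    (∀ j, 1 ≤ j → j ≤ k → 0 < s.esymm j) →
    (k:ℝ) * s.esymm k ≤ ((N:ℝ) - k + 1) * L * s.esymm (k-1) := by
  intro N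
  induction N using Nat.strong_induction_on with
  | _ N IH =>
    intro s hcard hkN hsL hG
    have hsum : 0 < s.sum := by
      have := hG 1 le_rfl hk; rwa [esymm_one'] at this
    have hLpos : 0 < L := by
      by_contra hL; push_neg at hL
      have h0 : s.sum ≤ 0 := by
        have := Multiset.sum_le_card_nsmul s 0 (fun x hx => (hsL x hx).trans hL)
        simpa using this
      linarith
    rcases eq_or_lt_of_le hk with hk1 | hk2
    · -- k = 1
      rw [← hk1]
      simp only [Nat.cast_one]
      rw [show (1:ℕ) - 1 = 0 from rfl, esymm_zero', esymm_one']
      have := Multiset.sum_le_card_nsmul s L (fun x hx => hsL x hx)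
      rw [hcard] at this
      simp only [nsmul_eq_mul] at this
      have hN1 : (1:ℝ) ≤ (N:ℝ) := by exact_mod_cast hk1 ▸ hkN
      nlinarith [this]
    · by_cases hneg : ∀ x ∈ s, 0 ≤ x
      · obtain ⟨r, rfl⟩ : ∃ r, k = r + 1 := ⟨k-1, by omega⟩
        have hb := nonneg_level_bound s hneg hsL hLpos.le r
        rw [hcard] at hb
        rw [show r + 1 - 1 = r by omega]
        push_cast
        linarith [hb]
      · push_neg at hneg
        obtain ⟨a, ha, haneg⟩ := hneg
        obtain ⟨w, hw'⟩ : ∃ w, s = a ::ₘ w := ⟨s.erase a, (Multiset.cons_erase ha).symm⟩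
        subst hw'
        have hw : ∀ t, t ≤ k → 0 < w.esymm t := pos_of_cons_nonpos haneg.le hG
        have hwcard : Multiset.card w = N - 1 := by simp at hcard; omega
        have hNk : k + 1 ≤ N := by
          rcases eq_or_lt_of_le hkN with h | h
          · exfalso
            have := all_pos_of_card_eq hk (h ▸ hcard ▸ rfl : Multiset.card (a ::ₘ w) = k) hG
            exact absurd (this a (Multiset.mem_cons_self a w)) (not_lt.2 haneg.le)
          · omega
        have hwL : ∀ x ∈ w, x ≤ L := fun x hx => hsL x (Multiset.mem_cons_of_mem hx)
        have hIH := IH (N-1) (by omega) w hwcard (by omega) hwL (fun j h1 h2 => hw j h2)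
        have hc1 : ((N-1 : ℕ) : ℝ) = (N:ℝ) - 1 := by
          push_cast [Nat.cast_sub (show 1 ≤ N by omega)]; ring
        rw [hc1] at hIH
        set d := w.esymm k with hd
        set c := w.esymm (k-1) with hc
        set b := w.esymm (k-2) with hb
        have hcpos : 0 < c := hw (k-1) (by omega)
        have hdpos : 0 < d := hw k le_rfl
        have hbpos : 0 < b := hw (k-2) (by omega)
        have hNewt : d * b ≤ c^2 := by
          have := newton w (k-1) (by omega)
          rw [show k - 1 + 1 = k by omega, show k - 1 - 1 = k - 2 by omega] at this
          exact this
        have hGk := hG k hk le_rfl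
        have hEk : (a ::ₘ w).esymm k = d + a * c := by
          obtain ⟨r, rfl⟩ : ∃ r, k = r + 1 := ⟨k-1, by omega⟩
          rw [esymm_cons]
          rw [show r + 1 - 1 = r by omega] at hc
          rw [← hd, ← hc]
        have hEk1 : (a ::ₘ w).esymm (k-1) = c + a * b := by
          obtain ⟨r, rfl⟩ : ∃ r, k = r + 2 := ⟨k-2, by omega⟩
          rw [show r + 2 - 1 = r + 1 by omega, esymm_cons]
          rw [show r + 2 - 1 = r + 1 by omega] at hc
          rw [show r + 2 - 2 = r by omega] at hb
          rw [← hc, ← hb]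
        rw [hEk] at hGk
        rw [hEk, hEk1]
        set M : ℝ := (N:ℝ) - k + 1 with hM
        have hM2 : 2 ≤ M := by
          have : (k:ℝ) + 1 ≤ (N:ℝ) := by exact_mod_cast hNk
          simp only [hM]; linarith
        -- hIH : k * d ≤ (M - 1) * L * c
        have hIH' : (k:ℝ) * d ≤ (M - 1) * L * c := by
          have : ((N:ℝ) - 1) - k + 1 = M - 1 := by simp only [hM]; ring
          rw [this] at hIH; exact hIH
        rcases le_or_gt (M*L*b) ((k:ℝ)*c) with hslope | hslope
        · have p1 : a * ((k:ℝ)*c - M*L*b) ≤ 0 :=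
            mul_nonpos_of_nonpos_of_nonneg haneg.le (by linarith)
          nlinarith [p1, hIH', mul_pos hLpos hcpos]
        · have p2 : 0 < M*L*b - (k:ℝ)*c := by linarith
          nlinarith [mul_pos p2 hGk, mul_nonneg (mul_nonneg (by linarith : (0:ℝ) ≤ M) hLpos.le)
            (by nlinarith [hNewt] : (0:ℝ) ≤ c^2 - d*b), hcpos, mul_pos hcpos hcpos]


/-- The `k`-th elementary symmetric polynomial of `κ ∈ ℝⁿ`. -/
noncomputable def esymm (n k : ℕ) (κ : Fin n → ℝ) : ℝ :=
  ∑ s ∈ Finset.powersetCard k Finset.univ, ∏ i ∈ s, κ i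

/-- For κ ∈ Γ_k ordered decreasingly, κ_n ≥ -((n-k)/k) κ_1, and in particular
    every entry κ_j ≥ -((n-k)/k) κ_1. -/
theorem stmt6 {n k : ℕ} (hk : 1 ≤ k) (hkn : k ≤ n) (κ : Fin n → ℝ)
    (hord : ∀ i j : Fin n, i ≤ j → κ j ≤ κ i)
    (hΓ : ∀ j, 1 ≤ j → j ≤ k → 0 < esymm n j κ) :
    κ ⟨n - 1, by omega⟩ ≥ -(((n : ℝ) - k) / k) * κ ⟨0, by omega⟩ ∧
      ∀ j : Fin n, κ j ≥ -(((n : ℝ) - k) / k) * κ ⟨0, by omega⟩ := by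
  have hn : 1 ≤ n := hk.trans hkn
  set s : Multiset ℝ := Multiset.map κ Finset.univ.val with hs
  have hcard : Multiset.card s = n := by simp [hs]
  have hes : ∀ j, esymm n j κ = s.esymm j := by
    intro j
    rw [hs, Finset.esymm_map_val]
    rfl
  set κ0 : ℝ := κ ⟨0, by omega⟩ with hκ0
  set κl : ℝ := κ ⟨n - 1, by omega⟩ with hκl
  have hG : ∀ j, 1 ≤ j → j ≤ k → 0 < s.esymm j := fun j h1 h2 => hes j ▸ hΓ j h1 h2
  have hmemL : ∀ x ∈ s, x ≤ κ0 := by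
    intro x hx
    obtain ⟨i, _, rfl⟩ := Multiset.mem_map.1 hx
    exact hord ⟨0, by omega⟩ i (by simp [Fin.le_def])
  have hlmem : κl ∈ s := Multiset.mem_map.2 ⟨⟨n - 1, by omega⟩, by simp, rfl⟩
  have hk0 : (0:ℝ) < (k:ℝ) := by exact_mod_cast hk
  have hκ0pos : 0 < κ0 := by
    have h1 := hG 1 le_rfl hk
    rw [esymm_one'] at h1
    by_contra hc
    push_neg at hc
    have h0 : s.sum ≤ 0 := by
      have := Multiset.sum_le_card_nsmul s 0 (fun x hx => (hmemL x hx).trans hc)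
      simpa using this
    linarith
  have part1 : κl ≥ -(((n : ℝ) - k) / k) * κ0 := by
    rcases le_or_gt 0 κl with hl0 | hl0
    · have hnk : (0:ℝ) ≤ (n:ℝ) - k := by
        have : (k:ℝ) ≤ (n:ℝ) := by exact_mod_cast hkn
        linarith
      have : 0 ≤ ((n:ℝ) - k) / k * κ0 := by positivity
      linarith
    · obtain ⟨w, hw'⟩ : ∃ w, s = κl ::ₘ w := ⟨s.erase κl, (Multiset.cons_erase hlmem).symm⟩
      have hw : ∀ t, t ≤ k → 0 < w.esymm t :=
        pos_of_cons_nonpos hl0.le (fun t h1 h2 => hw' ▸ hG t h1 h2)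
      have hwcard : Multiset.card w = n - 1 := by
        have := hcard; rw [hw'] at this; simp at this; omega
      have hNk : k + 1 ≤ n := by
        rcases eq_or_lt_of_le hkn with h | h
        · exfalso
          have := all_pos_of_card_eq hk (h ▸ hcard) hG
          exact absurd (this κl hlmem) (not_lt.2 hl0.le)
        · omega
      have hwL : ∀ x ∈ w, x ≤ κ0 := fun x hx => hmemL x (hw' ▸ Multiset.mem_cons_of_mem hx)
      have hMB := main_bound hk (n-1) w hwcard (by omega) hwL (fun j _ h2 => hw j h2)
      have hc1 : ((n-1 : ℕ) : ℝ) = (n:ℝ) - 1 := by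
        push_cast [Nat.cast_sub (show 1 ≤ n by omega)]; ring
      rw [hc1] at hMB
      have hcpos : 0 < w.esymm (k-1) := hw (k-1) (by omega)
      have hGk := hG k hk le_rfl
      have hEk : s.esymm k = w.esymm k + κl * w.esymm (k-1) := by
        obtain ⟨r, hr⟩ : ∃ r, k = r + 1 := ⟨k-1, by omega⟩
        subst hr
        rw [hw', esymm_cons, show r + 1 - 1 = r by omega]
      rw [hEk] at hGk
      have key : -(((n:ℝ)) - k) * κ0 ≤ (k:ℝ) * κl := by
        nlinarith [hMB, hGk, hcpos, hk0]
      rw [ge_iff_le, show -(((n : ℝ) - k) / k) * κ0 = (-(((n:ℝ) - k) * κ0)) / k by ring,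
        div_le_iff₀ hk0]
      linarith [key]
  refine ⟨part1, fun j => ?_⟩
  have : κl ≤ κ j := hord j ⟨n - 1, by omega⟩ (by simp [Fin.le_def]; omega)
  linarith [part1]
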